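/- arXiv:2308.11987 — 3 statements merged into one kernel-verified Lean document; each statement's English description precedes it below -/
import Mathlib

section
/- Let m and m' be coprime positive integers and let v be a real number with v ≥ log m. Then Δ(m·m') ≥ τ(m) · Δ^{(v)}(m') / (2v + 1). -/
open Filter Topology
open scoped Classical

noncomputable def LLog (x : ℝ) : ℝ := max 1 (Real.log x)
noncomputable def LLog2 (x : ℝ) : ℝ := LLog (LLog x)
noncomputable def LLog3 (x : ℝ) : ℝ := LLog (LLog2 x)

/-- `Δ^{(v)}(n)`: the maximal number of divisors of `n` in an interval `(e^u, e^{u+v}]`. -/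
noncomputable def DeltaV (v : ℝ) (n : ℕ) : ℕ :=
  ⨆ u : ℝ, (n.divisors.filter fun d => Real.exp u < (d : ℝ) ∧ (d : ℝ) ≤ Real.exp (u + v)).card

/-- The Erdős–Hooley Delta function. -/
noncomputable def Delta (n : ℕ) : ℕ := DeltaV 1 n

/-- `S_{[y,x)}`: squarefree positive integers all of whose prime factors `p` satisfy `y ≤ p < x`. -/
def Sset (y x : ℝ) : Set ℕ :=
  {n | 0 < n ∧ Squarefree n ∧ ∀ p ∈ n.primeFactors, y ≤ (p : ℝ) ∧ (p : ℝ) < x}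

/-- `∏_{y ≤ p < x} (1 + 1/p)⁻¹`, product over primes. -/
noncomputable def primeProd (y x : ℝ) : ℝ :=
  ∏ᶠ p ∈ {p : ℕ | p.Prime ∧ y ≤ (p : ℝ) ∧ (p : ℝ) < x}, ((1 : ℝ) + 1 / p)⁻¹

/-- number of distinct prime factors -/
def omegaN (n : ℕ) : ℕ := n.primeFactors.card

/-- number of divisors -/
def tauN (n : ℕ) : ℕ := n.divisors.card

/-- `n_{<y}`: the largest divisor of `n` (squarefree) composed of primes `< y`. -/
noncomputable def nsmall (n : ℕ) (y : ℝ) : ℕ :=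
  ∏ p ∈ n.primeFactors.filter (fun p : ℕ => (p : ℝ) < y), p

def Yset (α x : ℝ) : Set ℝ :=
  {y | 0 < y ∧ |LLog2 y - α * LLog2 x| ≤ Real.sqrt (LLog2 x) ∧ ∃ m : ℤ, LLog2 y = m * Real.log 2}

def Uset (α x : ℝ) : Set ℤ :=
  {u | |(u : ℝ) - (Real.log 4 - 1) / Real.log 2 * (α * LLog2 x)| ≤ Real.sqrt (LLog2 x)}

noncomputable def Qfun (t : ℝ) : ℝ := t * Real.log t - t + 1

/-- the natural-number version of the interval divisor count -/
noncomputable def Dcard (v : ℝ) (n : ℕ) (u : ℝ) : ℕ :=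
  (n.divisors.filter fun d : ℕ => Real.exp u < (d : ℝ) ∧ (d : ℝ) ≤ Real.exp (u + v)).card

lemma Dcard_eq (v : ℝ) (n : ℕ) (u : ℝ) :
    (n.divisors.filter fun d => Real.exp u < (d : ℝ) ∧ (d : ℝ) ≤ Real.exp (u + v)).card
      = Dcard v n u := by
  have h : ((do let a ← n.divisors; pure ((a : ℝ))) : Finset ℝ) = n.divisors.image Nat.cast := by
    simp only [Finset.pure_def, Finset.bind_def, Finset.sup_singleton_apply]
  rw [show ((do let a ← n.divisors; pure ((a : ℝ))) : Finset ℝ).filter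
      (fun d => Real.exp u < d ∧ d ≤ Real.exp (u + v)) =
      ((n.divisors.image Nat.cast).filter (fun d => Real.exp u < d ∧ d ≤ Real.exp (u + v))) from by rw [h]]
  rw [Finset.filter_image]
  rw [Finset.card_image_of_injective _ Nat.cast_injective]
  rfl

lemma deltaV_eq_iSup (v : ℝ) (n : ℕ) : DeltaV v n = ⨆ u : ℝ, Dcard v n u := by
  unfold DeltaV
  congr 1
  ext u
  exact Dcard_eq v n u

lemma bdd_dcard (v : ℝ) (n : ℕ) : BddAbove (Set.range fun u : ℝ => Dcard v n u) := by
  refine ⟨n.divisors.card, ?_⟩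
  rw [mem_upperBounds]
  exact Set.forall_mem_range.mpr fun u => Finset.card_filter_le n.divisors _

lemma card_le_deltaV (v : ℝ) (n : ℕ) (u : ℝ) : Dcard v n u ≤ DeltaV v n := by
  rw [deltaV_eq_iSup]
  exact le_ciSup (bdd_dcard v n) u

lemma exists_deltaV (v : ℝ) (n : ℕ) : ∃ u : ℝ, DeltaV v n = Dcard v n u := by
  rw [deltaV_eq_iSup]
  have h := Nat.sSup_mem (s := Set.range fun u : ℝ => Dcard v n u) ⟨_, ⟨0, rfl⟩⟩ (bdd_dcard v n)
  obtain ⟨u, hu⟩ := h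
  exact ⟨u, hu.symm⟩

theorem statement7 (m m' : ℕ) (hm : 0 < m) (hm' : 0 < m')
    (hcop : Nat.Coprime m m') (v : ℝ) (hv : Real.log m ≤ v) :
    (tauN m : ℝ) * (DeltaV v m' : ℝ) / (2 * v + 1) ≤ (Delta (m * m') : ℝ) := by
  have hv0 : 0 ≤ v := le_trans (Real.log_nonneg (by exact_mod_cast hm)) hv
  have h2v1 : (0 : ℝ) < 2 * v + 1 := by linarith
  rw [div_le_iff₀ h2v1]
  obtain ⟨u, hu⟩ := exists_deltaV v m'
  set S : Finset ℕ := m'.divisors.filter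
    (fun d : ℕ => Real.exp u < (d : ℝ) ∧ (d : ℝ) ≤ Real.exp (u + v)) with hSdef
  set N : ℕ := ⌈2 * v⌉₊ with hNdef
  set T : Finset ℕ := (m.divisors ×ˢ S).image (fun p => p.1 * p.2) with hTdef
  -- injectivity
  have hinj : Set.InjOn (fun p : ℕ × ℕ => p.1 * p.2) ↑(m.divisors ×ˢ S) := by
    rintro ⟨d1, e1⟩ h1 ⟨d2, e2⟩ h2 heq
    simp only [Finset.coe_product, Set.mem_prod, Finset.mem_coe, Finset.mem_product,
      Nat.mem_divisors, hSdef, Finset.mem_filter] at h1 h2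
    obtain ⟨⟨hd1, -⟩, ⟨he1, -⟩, -⟩ := h1
    obtain ⟨⟨hd2, -⟩, ⟨he2, -⟩, -⟩ := h2
    simp only at heq
    have hd1pos : 0 < d1 := Nat.pos_of_dvd_of_pos hd1 hm
    have c12 : Nat.Coprime d1 e2 := (hcop.coprime_dvd_left hd1).coprime_dvd_right he2
    have c21 : Nat.Coprime d2 e1 := (hcop.coprime_dvd_left hd2).coprime_dvd_right he1
    have hdd : d1 = d2 := by
      apply Nat.dvd_antisymm
      · exact c12.dvd_of_dvd_mul_right ⟨e1, heq.symm⟩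
      · exact c21.dvd_of_dvd_mul_right ⟨e2, heq⟩
    subst hdd
    have : e1 = e2 := Nat.eq_of_mul_eq_mul_left hd1pos heq
    simp [this]
  have hTcard : T.card = tauN m * S.card := by
    rw [hTdef, Finset.card_image_of_injOn hinj, Finset.card_product]
    rfl
  -- each element of T is a divisor of m*m' in a dyadic-type window
  have hmem : ∀ x ∈ T, ∃ j ∈ Finset.range N,
      x ∈ (m * m').divisors.filter
        (fun d : ℕ => Real.exp (u + j) < (d : ℝ) ∧ (d : ℝ) ≤ Real.exp ((u + j) + 1)) := by
    intro x hx
    rw [hTdef, Finset.mem_image] at hx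
    obtain ⟨⟨d, e⟩, hp, hxde⟩ := hx
    rw [Finset.mem_product] at hp
    obtain ⟨hd, he⟩ := hp
    rw [hSdef, Finset.mem_filter] at he
    obtain ⟨he, heu, hev⟩ := he
    rw [Nat.mem_divisors] at hd he
    have hdpos : 0 < d := Nat.pos_of_dvd_of_pos hd.1 hm
    have hepos : 0 < e := Nat.pos_of_dvd_of_pos he.1 hm'
    have hxpos : 0 < x := by rw [← hxde]; positivity
    have hxdvd : x ∣ m * m' := by rw [← hxde]; exact mul_dvd_mul hd.1 he.1
    -- real bounds on x
    have hxR : (x : ℝ) = (d : ℝ) * (e : ℝ) := by rw [← hxde]; push_cast; ring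
    have hxlb : Real.exp u < (x : ℝ) := by
      rw [hxR]
      calc Real.exp u < (e : ℝ) := heu
        _ ≤ (d : ℝ) * (e : ℝ) := by
            have h1 : (1:ℝ) ≤ (d:ℝ) := by exact_mod_cast hdpos
            have h2 : (0:ℝ) < (e:ℝ) := by exact_mod_cast hepos
            nlinarith
    have hmle : (m : ℝ) ≤ Real.exp v := by
      calc (m : ℝ) = Real.exp (Real.log m) := (Real.exp_log (by exact_mod_cast hm)).symm
        _ ≤ Real.exp v := Real.exp_le_exp.mpr hv
    have hdle : (d : ℝ) ≤ Real.exp v := by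
      refine le_trans ?_ hmle
      exact_mod_cast Nat.le_of_dvd hm hd.1
    have hxub : (x : ℝ) ≤ Real.exp (u + 2 * v) := by
      rw [hxR]
      calc (d : ℝ) * e ≤ Real.exp v * Real.exp (u + v) := by
            apply mul_le_mul hdle hev (by positivity) (Real.exp_nonneg v)
        _ = Real.exp (u + 2 * v) := by rw [← Real.exp_add]; ring_nf
    -- choose the window
    set t : ℝ := Real.log x - u with htdef
    have hxlog : Real.log (x : ℝ) = u + t := by rw [htdef]; ring
    have htpos : 0 < t := by
      have := Real.exp_lt_exp.mpr (show u < Real.log x from ?_)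
      · linarith [show u < Real.log x from by
          have := (Real.lt_log_iff_exp_lt (by exact_mod_cast hxpos)).mpr hxlb
          linarith]
      · exact (Real.lt_log_iff_exp_lt (by exact_mod_cast hxpos)).mpr hxlb
    have htub : t ≤ 2 * v := by
      have : Real.log x ≤ u + 2 * v := by
        calc Real.log x ≤ Real.log (Real.exp (u + 2 * v)) :=
              Real.log_le_log (by exact_mod_cast hxpos) hxub
          _ = u + 2 * v := Real.log_exp _
      linarith
    have hceil1 : 1 ≤ ⌈t⌉₊ := Nat.one_le_ceil_iff.mpr htpos
    refine ⟨⌈t⌉₊ - 1, ?_, ?_⟩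
    · rw [Finset.mem_range]
      have : ⌈t⌉₊ ≤ N := Nat.ceil_le_ceil htub
      omega
    · rw [Finset.mem_filter, Nat.mem_divisors]
      have hjcast : ((⌈t⌉₊ - 1 : ℕ) : ℝ) = (⌈t⌉₊ : ℝ) - 1 := by
        push_cast [hceil1]; ring
      refine ⟨⟨hxdvd, by positivity⟩, ?_, ?_⟩
      · rw [show (x : ℝ) = Real.exp (u + t) from by
          rw [← hxlog]; exact (Real.exp_log (by exact_mod_cast hxpos)).symm]
        apply Real.exp_lt_exp.mpr
        rw [hjcast]
        have := Nat.ceil_lt_add_one (le_of_lt htpos)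
        linarith
      · rw [show (x : ℝ) = Real.exp (u + t) from by
          rw [← hxlog]; exact (Real.exp_log (by exact_mod_cast hxpos)).symm]
        apply Real.exp_le_exp.mpr
        rw [hjcast]
        have := Nat.le_ceil t
        linarith
  -- covering bound
  have hcover : T.card ≤ N * Delta (m * m') := by
    have hsub : T ⊆ (Finset.range N).biUnion (fun j => (m * m').divisors.filter
        (fun d : ℕ => Real.exp (u + j) < (d : ℝ) ∧ (d : ℝ) ≤ Real.exp ((u + j) + 1))) := by
      intro x hx
      rw [Finset.mem_biUnion]
      exact hmem x hx
    calc T.card ≤ _ := Finset.card_le_card hsub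
      _ ≤ ∑ j ∈ Finset.range N, ((m * m').divisors.filter
          (fun d : ℕ => Real.exp (u + j) < (d : ℝ) ∧ (d : ℝ) ≤ Real.exp ((u + j) + 1))).card :=
          Finset.card_biUnion_le
      _ ≤ ∑ _j ∈ Finset.range N, Delta (m * m') := by
          apply Finset.sum_le_sum
          intro j _
          exact card_le_deltaV 1 (m * m') (u + j)
      _ = N * Delta (m * m') := by rw [Finset.sum_const, Finset.card_range, smul_eq_mul]
  -- conclude
  have hkey : tauN m * DeltaV v m' ≤ N * Delta (m * m') := by
    rw [hu]
    calc tauN m * Dcard v m' u = T.card := by rw [hTcard]; rfl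
      _ ≤ N * Delta (m * m') := hcover
  have hNle : (N : ℝ) ≤ 2 * v + 1 := by
    rw [hNdef]
    exact le_of_lt (Nat.ceil_lt_add_one (by linarith))
  have hkeyR : (tauN m : ℝ) * (DeltaV v m' : ℝ) ≤ (N : ℝ) * (Delta (m * m') : ℝ) := by
    exact_mod_cast hkey
  calc (tauN m : ℝ) * (DeltaV v m' : ℝ) ≤ (N : ℝ) * (Delta (m * m') : ℝ) := hkeyR
    _ ≤ (2 * v + 1) * (Delta (m * m') : ℝ) := by
        apply mul_le_mul_of_nonneg_right hNle (by positivity)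
    _ = (Delta (m * m') : ℝ) * (2 * v + 1) := by ring
end

section
/- Let 3 ≤ y ≤ x, set λ := y^{1/(20·Log₂ x)}, and let n be a squarefree positive integer all of whose prime factors p satisfy y ≤ p < x, with ω(n) < 2·Log₂ x. Let A := {a ∈ ℤ : λ^{a−2} ≥ y, λ^{a−1} ≤ x, and n has a prime factor p with λ^{a−2} ≤ p < λ^{a−1}}. Then Δ^{(Log y)}(n) ≥ m(A). -/
open Filter Topology
open scoped Classical

/-- The subsum multiplicity of a set of integers: the largest `m` for which there exist
`m` distinct finite subsets with equal sums. -/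
noncomputable def msub (A : Set ℤ) : ℕ :=
  sSup {m | ∃ F : Finset (Finset ℤ), F.card = m ∧ (∀ B ∈ F, ↑B ⊆ A) ∧
    ∃ s : ℤ, ∀ B ∈ F, (∑ a ∈ B, a) = s}

lemma filter_bind_card_aux (n : ℕ) (p : ℝ → Prop) [DecidablePred p] :
    (Finset.filter p (do let a ← n.divisors; pure ((a : ℕ) : ℝ))).card
      = (n.divisors.filter (fun d : ℕ => p (d : ℝ))).card := by
  have h : (do let a ← n.divisors; pure ((a : ℕ) : ℝ) : Finset ℝ)
      = n.divisors.image (fun a : ℕ => (a : ℝ)) := Finset.sup_singleton_apply _ _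
  rw [h, Finset.filter_image,
    Finset.card_image_of_injective _ (Nat.cast_injective : Function.Injective ((↑·) : ℕ → ℝ))]

theorem statement15 (x y : ℝ) (hy : 3 ≤ y) (hyx : y ≤ x)
    (lam : ℝ) (hlam : lam = y ^ (1 / (20 * LLog2 x)))
    (n : ℕ) (hn : 0 < n) (hsq : Squarefree n)
    (hpf : ∀ p ∈ n.primeFactors, y ≤ (p : ℝ) ∧ (p : ℝ) < x)
    (hom : (omegaN n : ℝ) < 2 * LLog2 x) :
    msub {a : ℤ | y ≤ lam ^ (a - 2) ∧ lam ^ (a - 1) ≤ x ∧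
        ∃ p ∈ n.primeFactors, lam ^ (a - 2) ≤ (p : ℝ) ∧ (p : ℝ) < lam ^ (a - 1)}
      ≤ DeltaV (LLog y) n := by
  classical
  have hypos : (0:ℝ) < y := by linarith
  have hL1 : (1:ℝ) ≤ LLog2 x := le_max_left _ _
  have hLpos : (0:ℝ) < LLog2 x := lt_of_lt_of_le one_pos hL1
  have hlogy : 1 < Real.log y := by
    rw [Real.lt_log_iff_exp_lt hypos]
    calc Real.exp 1 < 2.7182818286 := Real.exp_one_lt_d9
      _ ≤ y := by linarith
  have hlam1 : 1 < lam := by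
    rw [hlam]
    exact (Real.one_lt_rpow_iff_of_pos hypos).2 (Or.inl ⟨by linarith, by positivity⟩)
  have hlampos : (0:ℝ) < lam := lt_trans one_pos hlam1
  set ℓ := Real.log lam with hℓ
  have hlpos : 0 < ℓ := Real.log_pos hlam1
  have hloglam : ℓ = Real.log y / (20 * LLog2 x) := by
    rw [hℓ, hlam, Real.log_rpow hypos]; ring
  set ω := ((omegaN n : ℕ) : ℝ) with hω
  have hωnn : 0 ≤ ω := Nat.cast_nonneg _
  have h2ω : 2 * ω * ℓ < Real.log y / 5 := by
    have hkey : ℓ * (20 * LLog2 x) = Real.log y := by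
      rw [hloglam]; field_simp
    rw [← hkey]
    nlinarith [hlpos, hom, hωnn]
  have hLLy : LLog y = Real.log y := max_eq_right hlogy.le
  -- the condition defining A (third component)
  set Cond : ℤ → Prop := fun a =>
    ∃ p ∈ n.primeFactors, lam ^ (a - 2) ≤ (p : ℝ) ∧ (p : ℝ) < lam ^ (a - 1) with hCond
  have hEx : ∀ a : ℤ, ∃ p : ℕ, Cond a →
      p ∈ n.primeFactors ∧ lam ^ (a - 2) ≤ (p : ℝ) ∧ (p : ℝ) < lam ^ (a - 1) := by
    intro a
    by_cases h : Cond a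
    · obtain ⟨q, hq, h1, h2⟩ := h
      exact ⟨q, fun _ => ⟨hq, h1, h2⟩⟩
    · exact ⟨0, fun h' => absurd h' h⟩
  choose P hP using hEx
  -- injectivity of P on Cond
  have hPinj : ∀ a b : ℤ, Cond a → Cond b → P a = P b → a = b := by
    intro a b ha hb h
    by_contra hne
    have key : ∀ a b : ℤ, Cond a → Cond b → a < b → (P a : ℝ) < (P b : ℝ) := by
      intro a b ha hb hab
      calc (P a : ℝ) < lam ^ (a - 1) := (hP a ha).2.2
        _ ≤ lam ^ (b - 2) := zpow_le_zpow_right₀ hlam1.le (by omega)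
        _ ≤ (P b : ℝ) := (hP b hb).2.1
    rcases lt_or_gt_of_ne hne with hlt | hlt
    · have := key a b ha hb hlt
      rw [h] at this; exact lt_irrefl _ this
    · have := key b a hb ha hlt
      rw [h] at this; exact lt_irrefl _ this
  unfold msub
  refine csSup_le ⟨0, ∅, Finset.card_empty, by simp, 0, by simp⟩ ?_
  rintro m ⟨F, rfl, hFsub, s, hFsum⟩
  set u : ℝ := (s : ℝ) * ℓ - 2 * ω * ℓ - Real.log y / 5 with hu
  -- divisor-counting function
  unfold DeltaV
  simp only [filter_bind_card_aux]
  have hbdd : BddAbove (Set.range fun u : ℝ =>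
      (n.divisors.filter fun d : ℕ => Real.exp u < (d : ℝ) ∧ (d : ℝ) ≤ Real.exp (u + LLog y)).card) := by
    refine ⟨n.divisors.card, ?_⟩
    rintro _ ⟨u, rfl⟩
    exact Finset.card_filter_le _ _
  have hstep : F.card ≤ (n.divisors.filter fun d : ℕ =>
      Real.exp u < (d : ℝ) ∧ (d : ℝ) ≤ Real.exp (u + LLog y)).card := by
    set D : Finset ℤ → ℕ := fun B => ∏ a ∈ B, P a with hD
    -- facts for each B ∈ F
    have hBC : ∀ B ∈ F, ∀ a ∈ B, Cond a := fun B hB a ha => (hFsub B hB ha).2.2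
    have himage : ∀ B ∈ F, (D B).primeFactors = B.image P := by
      intro B hB
      have : D B = ∏ p ∈ B.image P, p := by
        rw [Finset.prod_image (fun a ha b hb h => hPinj a b (hBC B hB a ha) (hBC B hB b hb) h)]
      rw [this]
      refine Nat.primeFactors_prod ?_
      intro p hp
      obtain ⟨a, ha, rfl⟩ := Finset.mem_image.1 hp
      exact Nat.prime_of_mem_primeFactors (hP a (hBC B hB a ha)).1
    have hsubPF : ∀ B ∈ F, B.image P ⊆ n.primeFactors := by
      intro B hB p hp
      obtain ⟨a, ha, rfl⟩ := Finset.mem_image.1 hp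
      exact (hP a (hBC B hB a ha)).1
    have hdvd : ∀ B ∈ F, D B ∣ n := by
      intro B hB
      have h1 : D B = ∏ p ∈ B.image P, p := by
        rw [Finset.prod_image (fun a ha b hb h => hPinj a b (hBC B hB a ha) (hBC B hB b hb) h)]
      rw [h1]
      exact (Finset.prod_dvd_prod_of_subset _ _ _ (hsubPF B hB)).trans (Nat.prod_primeFactors_dvd n)
    have hDpos : ∀ B ∈ F, 0 < D B := fun B hB => Nat.pos_of_dvd_of_pos (hdvd B hB) hn
    have hcard : ∀ B ∈ F, (B.card : ℝ) ≤ ω := by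
      intro B hB
      have h1 : B.card = (B.image P).card :=
        (Finset.card_image_of_injOn (fun a ha b hb h =>
          hPinj a b (hBC B hB a (Finset.mem_coe.1 ha)) (hBC B hB b (Finset.mem_coe.1 hb)) h)).symm
      have h2 : (B.image P).card ≤ n.primeFactors.card := Finset.card_le_card (hsubPF B hB)
      rw [hω]
      exact_mod_cast h1 ▸ h2
    have hlogD : ∀ B ∈ F, Real.log (D B) = ∑ a ∈ B, Real.log (P a) := by
      intro B hB
      rw [hD]
      push_cast
      refine Real.log_prod ?_
      intro a ha
      have : (P a).Prime := Nat.prime_of_mem_primeFactors (hP a (hBC B hB a ha)).1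
      exact_mod_cast this.pos.ne'
    have hsum : ∀ B ∈ F, ∑ a ∈ B, ((a : ℝ)) = (s : ℝ) := by
      intro B hB
      rw [← hFsum B hB]
      push_cast
      rfl
    -- lower bound on log (D B)
    have hlow : ∀ B ∈ F, ((s : ℝ) - 2 * B.card) * ℓ ≤ Real.log (D B) := by
      intro B hB
      rw [hlogD B hB]
      have h1 : ∀ a ∈ B, ((a : ℝ) - 2) * ℓ ≤ Real.log (P a) := by
        intro a ha
        have h2 : Real.log (lam ^ (a - 2)) = ((a : ℝ) - 2) * ℓ := by
          rw [Real.log_zpow]; push_cast; ring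
        rw [← h2]
        exact Real.log_le_log (zpow_pos hlampos _) (hP a (hBC B hB a ha)).2.1
      calc ((s : ℝ) - 2 * B.card) * ℓ = ∑ a ∈ B, ((a : ℝ) - 2) * ℓ := by
            rw [← Finset.sum_mul]
            congr 1
            rw [Finset.sum_sub_distrib, hsum B hB, Finset.sum_const, nsmul_eq_mul]
            ring
        _ ≤ ∑ a ∈ B, Real.log (P a) := Finset.sum_le_sum h1
    -- upper bound on log (D B)
    have hupp : ∀ B ∈ F, Real.log (D B) ≤ (s : ℝ) * ℓ := by
      intro B hB
      rw [hlogD B hB]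
      have h1 : ∀ a ∈ B, Real.log (P a) ≤ ((a : ℝ) - 1) * ℓ := by
        intro a ha
        have h2 : Real.log (lam ^ (a - 1)) = ((a : ℝ) - 1) * ℓ := by
          rw [Real.log_zpow]; push_cast; ring
        rw [← h2]
        have hp : (0:ℝ) < (P a : ℝ) := by
          have : (P a).Prime := Nat.prime_of_mem_primeFactors (hP a (hBC B hB a ha)).1
          exact_mod_cast this.pos
        exact Real.log_le_log hp (hP a (hBC B hB a ha)).2.2.le
      calc ∑ a ∈ B, Real.log (P a) ≤ ∑ a ∈ B, ((a : ℝ) - 1) * ℓ := Finset.sum_le_sum h1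
        _ = ((s : ℝ) - B.card) * ℓ := by
            rw [← Finset.sum_mul]
            congr 1
            rw [Finset.sum_sub_distrib, hsum B hB, Finset.sum_const, nsmul_eq_mul]
            ring
        _ ≤ (s : ℝ) * ℓ := by nlinarith [hlpos, (Nat.cast_nonneg B.card : (0:ℝ) ≤ B.card)]
    refine Finset.card_le_card_of_injOn D ?_ ?_
    · intro B hB
      rw [Finset.mem_coe, Finset.mem_filter]
      have hDposR : (0:ℝ) < (D B : ℝ) := by exact_mod_cast hDpos B hB
      refine ⟨Nat.mem_divisors.2 ⟨hdvd B hB, hn.ne'⟩, ?_, ?_⟩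
      · rw [← Real.lt_log_iff_exp_lt hDposR]
        have := hlow B hB
        have hkl : (B.card : ℝ) * ℓ ≤ ω * ℓ :=
          mul_le_mul_of_nonneg_right (hcard B hB) hlpos.le
        rw [hu]
        nlinarith [hlogy]
      · rw [← Real.log_le_iff_le_exp hDposR]
        have := hupp B hB
        rw [hu, hLLy]
        nlinarith [h2ω, hlogy]
    · intro B hB C hC h
      have hPF : B.image P = C.image P := by
        rw [← himage B (Finset.mem_coe.1 hB), ← himage C (Finset.mem_coe.1 hC), h]
      ext a
      constructor
      · intro ha
        have : P a ∈ C.image P := hPF ▸ Finset.mem_image_of_mem P ha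
        obtain ⟨c, hc, hca⟩ := Finset.mem_image.1 this
        have := hPinj c a (hBC C (Finset.mem_coe.1 hC) c hc) (hBC B (Finset.mem_coe.1 hB) a ha) hca
        exact this ▸ hc
      · intro ha
        have : P a ∈ B.image P := hPF ▸ Finset.mem_image_of_mem P ha
        obtain ⟨c, hc, hca⟩ := Finset.mem_image.1 this
        have := hPinj c a (hBC B (Finset.mem_coe.1 hB) c hc) (hBC C (Finset.mem_coe.1 hC) a ha) hca
        exact this ▸ hc
  exact le_trans hstep (le_ciSup hbdd u)
end

section
/- There is an absolute constant C > 0 such that for all 1 ≤ y ≤ x one has ∏_{y ≤ p < x}(1 + 1/p)^{-1} · ∑_{n ∈ S_{[y,x)}, ω(n) ≥ 2·Log₂ x} 1/n ≤ C/(Log x)^{log 4 − 1}. -/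
open Filter Topology
open scoped Classical

section Aux
open Finset
-- Chebyshev
lemma cheb (n : ℕ) : ∑ p ∈ Nat.primesBelow (n+1), Real.log p ≤ n * Real.log 4 := by
  have h0 : Nat.primesBelow (n+1) = {p ∈ range (n+1) | p.Prime} := rfl
  have h1 : ((primorial n : ℕ) : ℝ) ≤ (4:ℝ) ^ n := by exact_mod_cast primorial_le_4_pow n
  have h2 : Real.log (primorial n) = ∑ p ∈ Nat.primesBelow (n+1), Real.log p := by
    rw [primorial, ← h0, Nat.cast_prod, Real.log_prod]
    intro p hp
    exact Nat.cast_ne_zero.2 (Nat.prime_of_mem_primesBelow hp).pos.ne'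
  calc ∑ p ∈ Nat.primesBelow (n+1), Real.log p = Real.log (primorial n) := h2.symm
    _ ≤ Real.log ((4:ℝ)^n) := Real.log_le_log (by exact_mod_cast primorial_pos n) h1
    _ = n * Real.log 4 := by rw [Real.log_pow]

-- Legendre divisibility
lemma legendre_dvd (n : ℕ) : (∏ p ∈ Nat.primesBelow (n+1), p ^ (n / p)) ∣ n.factorial := by
  apply Finset.prod_dvd_of_isRelPrime
  · intro p hp q hq hpq
    have hp' := Nat.prime_of_mem_primesBelow (Finset.mem_coe.1 hp)
    have hq' := Nat.prime_of_mem_primesBelow (Finset.mem_coe.1 hq)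
    exact Nat.coprime_iff_isRelPrime.1
      (Nat.Coprime.pow _ _ ((Nat.coprime_primes hp' hq').2 hpq))
  · intro p hp
    have hp' := Nat.prime_of_mem_primesBelow hp
    have hpn : p ≤ n := Nat.lt_succ_iff.1 (Nat.lt_of_mem_primesBelow hp)
    rw [Nat.Prime.pow_dvd_factorial_iff hp' (Nat.lt_succ_self _)]
    have h1 : 1 ∈ Finset.Ico 1 (Nat.log p n + 1) := by
      rw [Finset.mem_Ico]
      exact ⟨le_refl 1, Nat.succ_lt_succ (Nat.log_pos hp'.one_lt hpn)⟩
    calc n / p = n / p ^ 1 := by rw [pow_one]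
      _ ≤ _ := Finset.single_le_sum (f := fun i => n / p ^ i) (fun i _ => Nat.zero_le _) h1

-- Mertens 1
lemma mertens1 (n : ℕ) (hn : 2 ≤ n) :
    ∑ p ∈ Nat.primesBelow (n+1), Real.log p / p ≤ Real.log n + Real.log 4 := by
  have hn0 : (0:ℝ) < n := by positivity
  have hle : (∏ p ∈ Nat.primesBelow (n+1), p ^ (n / p)) ≤ n.factorial :=
    Nat.le_of_dvd n.factorial_pos (legendre_dvd n)
  have hprodpos : 0 < ∏ p ∈ Nat.primesBelow (n+1), p ^ (n / p) := by
    apply Finset.prod_pos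
    intro p hp
    exact pow_pos (Nat.prime_of_mem_primesBelow hp).pos _
  have hlog1 : ∑ p ∈ Nat.primesBelow (n+1), ((n / p : ℕ) : ℝ) * Real.log p
      ≤ (n:ℝ) * Real.log n := by
    have h1 : Real.log (∏ p ∈ Nat.primesBelow (n+1), p ^ (n / p) : ℕ)
        = ∑ p ∈ Nat.primesBelow (n+1), ((n / p : ℕ) : ℝ) * Real.log p := by
      push_cast
      rw [Real.log_prod]
      · exact Finset.sum_congr rfl fun p hp => by rw [Real.log_pow]
      · intro p hp
        exact pow_ne_zero _ (Nat.cast_ne_zero.2 (Nat.prime_of_mem_primesBelow hp).pos.ne')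
    rw [← h1]
    calc Real.log _ ≤ Real.log (n.factorial : ℕ) :=
          Real.log_le_log (by exact_mod_cast hprodpos) (by exact_mod_cast hle)
      _ ≤ Real.log ((n:ℝ) ^ n) := by
          apply Real.log_le_log (by exact_mod_cast n.factorial_pos)
          exact_mod_cast n.factorial_le_pow
      _ = (n:ℝ) * Real.log n := by rw [Real.log_pow]
  have hfloor : ∀ p ∈ Nat.primesBelow (n+1),
      ((n:ℝ)/p - 1) * Real.log p ≤ ((n / p : ℕ) : ℝ) * Real.log p := by
    intro p hp
    have hp' := Nat.prime_of_mem_primesBelow hp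
    have hp0 : (0:ℝ) < p := by exact_mod_cast hp'.pos
    have hlogp : 0 ≤ Real.log p := Real.log_nonneg (by exact_mod_cast hp'.one_lt.le)
    apply mul_le_mul_of_nonneg_right _ hlogp
    have hdm := Nat.div_add_mod n p
    have hmod : n % p < p := Nat.mod_lt n hp'.pos
    have : (n:ℝ) < p * ((n / p : ℕ):ℝ) + p := by
      have : (p : ℝ) * ((n / p : ℕ):ℝ) + ((n % p : ℕ):ℝ) = (n:ℝ) := by exact_mod_cast hdm
      have h2 : ((n % p : ℕ):ℝ) < p := by exact_mod_cast hmod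
      linarith
    rw [div_sub_one hp0.ne', div_le_iff₀ hp0]
    nlinarith
  have hsum : ∑ p ∈ Nat.primesBelow (n+1), ((n:ℝ)/p - 1) * Real.log p
      ≤ (n:ℝ) * Real.log n := le_trans (Finset.sum_le_sum hfloor) hlog1
  have hexpand : ∑ p ∈ Nat.primesBelow (n+1), ((n:ℝ)/p - 1) * Real.log p
      = (n:ℝ) * ∑ p ∈ Nat.primesBelow (n+1), Real.log p / p
        - ∑ p ∈ Nat.primesBelow (n+1), Real.log p := by
    rw [Finset.mul_sum, ← Finset.sum_sub_distrib]
    apply Finset.sum_congr rfl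
    intro p hp
    have hp0 : (0:ℝ) < p := by exact_mod_cast (Nat.prime_of_mem_primesBelow hp).pos
    field_simp
  have hcheb := cheb n
  rw [hexpand] at hsum
  have : (n:ℝ) * ∑ p ∈ Nat.primesBelow (n+1), Real.log p / p
      ≤ (n:ℝ) * (Real.log n + Real.log 4) := by
    rw [mul_add]; linarith
  exact le_of_mul_le_mul_left this hn0

-- Abel summation bound
lemma abel_bound (a : ℕ → ℝ) (c : ℝ) (hc : 0 ≤ c) (ha : ∀ k, 0 ≤ a k) :
    ∀ K : ℕ, 1 ≤ K → (∀ j : ℕ, 1 ≤ j → j ≤ K → ∑ k ∈ Finset.Icc 1 j, a k ≤ j + c) →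
    ∑ k ∈ Finset.Icc 1 K, a k / k
      ≤ (∑ k ∈ Finset.Icc 1 K, a k) / K + Real.log K + c * (2 - 1/K) := by
  intro K hK
  induction K, hK using Nat.le_induction with
  | base =>
    simp only [Finset.Icc_self, Finset.sum_singleton, Nat.cast_one, Real.log_one]
    intro _
    linarith
  | succ K hK ih =>
    intro hA
    have hK0 : (0:ℝ) < K := by exact_mod_cast hK
    have hK1 : (0:ℝ) < (K:ℝ) + 1 := by linarith
    have ihh := ih (fun j h1 h2 => hA j h1 (le_trans h2 (Nat.le_succ K)))
    rw [Finset.sum_Icc_succ_top (by omega), Finset.sum_Icc_succ_top (by omega)]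
    have hAK : ∑ k ∈ Finset.Icc 1 K, a k ≤ K + c := hA K hK (Nat.le_succ K)
    have hAK0 : 0 ≤ ∑ k ∈ Finset.Icc 1 K, a k := Finset.sum_nonneg fun k _ => ha k
    set A := ∑ k ∈ Finset.Icc 1 K, a k with hA_def
    -- key : A / K - A / (K+1) ≤ (log (K+1) - log K) + c * (1/K - 1/(K+1))
    have hlog : Real.log K - Real.log ((K:ℝ)+1) ≤ (K:ℝ)/((K:ℝ)+1) - 1 := by
      rw [← Real.log_div hK0.ne' hK1.ne']
      exact Real.log_le_sub_one_of_pos (by positivity)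
    have hlog2 : 1/((K:ℝ)+1) ≤ Real.log ((K:ℝ)+1) - Real.log K := by
      have : (K:ℝ)/((K:ℝ)+1) - 1 = -(1/((K:ℝ)+1)) := by field_simp; ring
      linarith
    have key : A / K - A / ((K:ℝ)+1)
        ≤ (Real.log ((K:ℝ)+1) - Real.log K) + c * (1/K - 1/((K:ℝ)+1)) := by
      have e1 : A / K - A / ((K:ℝ)+1) = A / ((K:ℝ) * ((K:ℝ)+1)) := by
        field_simp
        ring
      have e2 : ((K:ℝ) + c) / ((K:ℝ) * ((K:ℝ)+1))
          = 1/((K:ℝ)+1) + c * (1/K - 1/((K:ℝ)+1)) := by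
        field_simp
        ring
      have e3 : A / ((K:ℝ) * ((K:ℝ)+1)) ≤ ((K:ℝ) + c) / ((K:ℝ) * ((K:ℝ)+1)) := by
        gcongr
      rw [e1]
      rw [e2] at e3
      linarith
    have hcast : ((K+1 : ℕ):ℝ) = (K:ℝ) + 1 := by push_cast; ring
    rw [hcast]
    have hck : c * (2 - 1/((K:ℝ)+1)) - c * (2 - 1/K) = c * (1/K - 1/((K:ℝ)+1)) := by ring
    have haK1 : 0 ≤ a (K+1) := ha (K+1)
    have hdiv : a (K+1) / ((K:ℝ)+1) + A / ((K:ℝ)+1) = (A + a (K+1)) / ((K:ℝ)+1) := by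
      field_simp
      ring
    nlinarith [ihh]

lemma exp_one_lt_3 : Real.exp 1 < 3 := lt_trans Real.exp_one_lt_d9 (by norm_num)

-- Mertens 2, natural version
lemma mertens2_nat (n : ℕ) (hn : 3 ≤ n) :
    ∑ p ∈ Nat.primesBelow (n+1), ((p:ℝ))⁻¹ ≤ Real.log (Real.log n) + 9 := by
  classical
  have hn0 : (3:ℝ) ≤ n := by exact_mod_cast hn
  have hlogn : 1 < Real.log n := by
    rw [← Real.exp_lt_exp (x := 1)] at *
    rw [Real.exp_log (by linarith : (0:ℝ) < n)]
    linarith [exp_one_lt_3]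
  set K := ⌊Real.log n⌋₊ with hK_def
  have hK1 : 1 ≤ K := Nat.le_floor (by exact_mod_cast hlogn.le)
  set Q := (Nat.primesBelow (n+1)).filter (fun p => 3 ≤ p) with hQ_def
  set g : ℕ → ℕ := fun p => ⌊Real.log p⌋₊ with hg_def
  -- facts about elements of Q
  have hQfacts : ∀ p ∈ Q, p.Prime ∧ 3 ≤ p ∧ 1 ≤ Real.log p ∧ 1 ≤ g p ∧ g p ≤ K := by
    intro p hp
    rw [hQ_def, Finset.mem_filter] at hp
    obtain ⟨hp1, hp3⟩ := hp
    have hp' := Nat.prime_of_mem_primesBelow hp1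
    have hpn : p ≤ n := Nat.lt_succ_iff.1 (Nat.lt_of_mem_primesBelow hp1)
    have hlogp : 1 ≤ Real.log p := by
      rw [Real.le_log_iff_exp_le (by positivity : (0:ℝ) < p)]
      have : (3:ℝ) ≤ p := by exact_mod_cast hp3
      linarith [exp_one_lt_3]
    refine ⟨hp', hp3, hlogp, Nat.le_floor (by exact_mod_cast hlogp), ?_⟩
    exact Nat.floor_le_floor (Real.log_le_log (by positivity) (by exact_mod_cast hpn))
  -- the fiber sums
  set a : ℕ → ℝ := fun k => ∑ p ∈ Q.filter (fun p => g p = k), Real.log p / p with ha_def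
  have ha : ∀ k, 0 ≤ a k := by
    intro k
    apply Finset.sum_nonneg
    intro p hp
    have hp' := (hQfacts p (Finset.mem_of_mem_filter p hp)).1
    have : (1:ℝ) ≤ p := by exact_mod_cast hp'.one_lt.le
    positivity
  have c_def : (0:ℝ) ≤ 1 + Real.log 4 := by positivity
  -- partial sums bound
  have hA : ∀ j : ℕ, 1 ≤ j → j ≤ K → ∑ k ∈ Finset.Icc 1 j, a k ≤ j + (1 + Real.log 4) := by
    intro j hj1 hjK
    set Qj := Q.filter (fun p => g p ≤ j) with hQj_def
    have hmaps : ∀ p ∈ Qj, g p ∈ Finset.Icc 1 j := by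
      intro p hp
      rw [hQj_def, Finset.mem_filter] at hp
      exact Finset.mem_Icc.2 ⟨(hQfacts p hp.1).2.2.2.1, hp.2⟩
    have hfib : ∑ k ∈ Finset.Icc 1 j, a k = ∑ p ∈ Qj, Real.log p / p := by
      rw [← Finset.sum_fiberwise_of_maps_to hmaps (fun p => Real.log p / (p:ℝ))]
      apply Finset.sum_congr rfl
      intro k hk
      rw [ha_def]
      apply Finset.sum_congr _ (fun _ _ => rfl)
      ext p
      simp only [hQj_def, Finset.mem_filter, and_assoc]
      have hk2 := (Finset.mem_Icc.1 hk).2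
      constructor
      · rintro ⟨h1, h3⟩
        exact ⟨h1, le_trans (le_of_eq h3) hk2, h3⟩
      · rintro ⟨h1, h2, h3⟩
        exact ⟨h1, h3⟩
    set m := ⌊Real.exp ((j:ℝ)+1)⌋₊ with hm_def
    have hm2 : 2 ≤ m := by
      apply Nat.le_floor
      have h1 : (1:ℝ) + 1 ≤ (j:ℝ) + 1 := by
        have : (1:ℝ) ≤ j := by exact_mod_cast hj1
        linarith
      have := Real.add_one_le_exp ((j:ℝ)+1)
      norm_num
      nlinarith
    have hsub : Qj ⊆ Nat.primesBelow (m+1) := by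
      intro p hp
      rw [hQj_def, Finset.mem_filter] at hp
      obtain ⟨hpQ, hgj⟩ := hp
      have hfacts := hQfacts p hpQ
      have hp0 : (0:ℝ) < p := by exact_mod_cast hfacts.1.pos
      have hlt : Real.log p < (j:ℝ) + 1 := by
        have := Nat.lt_floor_add_one (Real.log p)
        have hgle : (g p : ℝ) ≤ (j:ℝ) := by exact_mod_cast hgj
        calc Real.log p < (g p : ℝ) + 1 := this
          _ ≤ (j:ℝ) + 1 := by linarith
      have hpm : p ≤ m := by
        apply Nat.le_floor
        have hpe : (p:ℝ) = Real.exp (Real.log p) := (Real.exp_log hp0).symm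
        rw [hpe]
        exact Real.exp_le_exp.2 hlt.le
      exact Nat.mem_primesBelow.2 ⟨Nat.lt_succ_of_le hpm, hfacts.1⟩
    have hnneg : ∀ p ∈ Nat.primesBelow (m+1), p ∉ Qj → 0 ≤ Real.log p / p := by
      intro p hp _
      have hp' := Nat.prime_of_mem_primesBelow hp
      have : (1:ℝ) ≤ p := by exact_mod_cast hp'.one_lt.le
      positivity
    have hlogm : Real.log m ≤ (j:ℝ) + 1 := by
      have hm0 : (0:ℝ) < m := by exact_mod_cast (by omega : 0 < m)
      have : (m:ℝ) ≤ Real.exp ((j:ℝ)+1) := Nat.floor_le (by positivity)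
      calc Real.log m ≤ Real.log (Real.exp ((j:ℝ)+1)) := Real.log_le_log hm0 this
        _ = (j:ℝ) + 1 := Real.log_exp _
    calc ∑ k ∈ Finset.Icc 1 j, a k = ∑ p ∈ Qj, Real.log p / p := hfib
      _ ≤ ∑ p ∈ Nat.primesBelow (m+1), Real.log p / p :=
          Finset.sum_le_sum_of_subset_of_nonneg hsub hnneg
      _ ≤ Real.log m + Real.log 4 := mertens1 m hm2
      _ ≤ (j:ℝ) + (1 + Real.log 4) := by linarith
  -- per-element bound on Q
  have hper : ∀ p ∈ Q, ((p:ℝ))⁻¹ ≤ (Real.log p / p) / (g p) := by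
    intro p hp
    obtain ⟨hp', _, hlogp, hg1, _⟩ := hQfacts p hp
    have hp0 : (0:ℝ) < p := by exact_mod_cast hp'.pos
    have hg0 : (0:ℝ) < (g p : ℝ) := by exact_mod_cast hg1
    have hgle : (g p : ℝ) ≤ Real.log p := Nat.floor_le (by linarith)
    have he : ((p:ℝ))⁻¹ * ((p:ℝ) * (g p : ℝ)) = (g p : ℝ) := by field_simp
    rw [div_div, le_div_iff₀ (by positivity), he]
    linarith
  -- fiberwise decomposition of the Q sum
  have hmapsQ : ∀ p ∈ Q, g p ∈ Finset.Icc 1 K := by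
    intro p hp
    exact Finset.mem_Icc.2 ⟨(hQfacts p hp).2.2.2.1, (hQfacts p hp).2.2.2.2⟩
  have hfibQ : ∑ p ∈ Q, (Real.log p / p) / (g p) = ∑ k ∈ Finset.Icc 1 K, a k / k := by
    rw [← Finset.sum_fiberwise_of_maps_to hmapsQ (fun p => (Real.log p / (p:ℝ)) / (g p))]
    apply Finset.sum_congr rfl
    intro k hk
    rw [ha_def, Finset.sum_div]
    apply Finset.sum_congr rfl
    intro p hp
    rw [Finset.mem_filter] at hp
    rw [hp.2]
  have habel := abel_bound a (1 + Real.log 4) c_def ha K hK1 hA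
  have hAK := hA K hK1 (le_refl K)
  have hK0 : (0:ℝ) < K := by exact_mod_cast hK1
  have hlog4 : Real.log 4 ≤ (3:ℝ)/2 := by
    rw [show (4:ℝ) = 2^2 by norm_num, Real.log_pow]
    push_cast
    linarith [Real.log_two_lt_d9]
  have hlogK : Real.log K ≤ Real.log (Real.log n) := by
    apply Real.log_le_log hK0
    exact Nat.floor_le (by linarith)
  -- conclude for Q
  have hQsum : ∑ p ∈ Q, ((p:ℝ))⁻¹ ≤ Real.log (Real.log n) + 17/2 := by
    have h1 : ∑ p ∈ Q, ((p:ℝ))⁻¹ ≤ ∑ p ∈ Q, (Real.log p / p) / (g p) :=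
      Finset.sum_le_sum hper
    have hc2 : (1 + Real.log 4) * (2 - 1/(K:ℝ)) ≤ 2 * (1 + Real.log 4) := by
      have : (0:ℝ) < 1/(K:ℝ) := by positivity
      nlinarith
    have hAKK : (∑ k ∈ Finset.Icc 1 K, a k) / K ≤ 1 + (1 + Real.log 4) := by
      rw [div_le_iff₀ hK0]
      have : (1:ℝ) ≤ (K:ℝ) := by exact_mod_cast hK1
      nlinarith
    calc ∑ p ∈ Q, ((p:ℝ))⁻¹ ≤ ∑ k ∈ Finset.Icc 1 K, a k / k := by rw [← hfibQ]; exact h1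
      _ ≤ (∑ k ∈ Finset.Icc 1 K, a k) / K + Real.log K + (1 + Real.log 4) * (2 - 1/K) := habel
      _ ≤ (1 + (1 + Real.log 4)) + Real.log (Real.log n) + 2 * (1 + Real.log 4) := by
          linarith
      _ ≤ Real.log (Real.log n) + 17/2 := by linarith
  -- small primes
  have hsplit := Finset.sum_filter_add_sum_filter_not (Nat.primesBelow (n+1))
    (fun p => 3 ≤ p) (fun p => ((p:ℝ))⁻¹)
  have hsmall : ∑ p ∈ (Nat.primesBelow (n+1)).filter (fun p => ¬ 3 ≤ p), ((p:ℝ))⁻¹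
      ≤ 1/2 := by
    have hsub : (Nat.primesBelow (n+1)).filter (fun p => ¬ 3 ≤ p) ⊆ {2} := by
      intro p hp
      rw [Finset.mem_filter] at hp
      have hp' := Nat.prime_of_mem_primesBelow hp.1
      have := hp'.two_le
      have := hp.2
      simp only [Finset.mem_singleton]
      omega
    calc ∑ p ∈ (Nat.primesBelow (n+1)).filter (fun p => ¬ 3 ≤ p), ((p:ℝ))⁻¹
        ≤ ∑ p ∈ ({2} : Finset ℕ), ((p:ℝ))⁻¹ := by
          apply Finset.sum_le_sum_of_subset_of_nonneg hsub
          intro p _ _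
          positivity
      _ = 1/2 := by norm_num
  calc ∑ p ∈ Nat.primesBelow (n+1), ((p:ℝ))⁻¹
      = (∑ p ∈ (Nat.primesBelow (n+1)).filter (fun p => 3 ≤ p), ((p:ℝ))⁻¹)
        + ∑ p ∈ (Nat.primesBelow (n+1)).filter (fun p => ¬ 3 ≤ p), ((p:ℝ))⁻¹ := hsplit.symm
    _ ≤ (Real.log (Real.log n) + 17/2) + 1/2 := by
        have : (Nat.primesBelow (n+1)).filter (fun p => 3 ≤ p) = Q := rfl
        rw [this]
        linarith [hQsum, hsmall]
    _ = Real.log (Real.log n) + 9 := by ring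


lemma mertens2_real (x : ℝ) (hx : 1 ≤ x) :
    ∑ p ∈ Nat.primesBelow ⌈x⌉₊, ((p:ℝ))⁻¹ ≤ LLog2 x + 9 := by
  have hL2 : 1 ≤ LLog2 x := le_max_left _ _
  rcases le_or_gt ⌈x⌉₊ 3 with h | h
  · calc ∑ p ∈ Nat.primesBelow ⌈x⌉₊, ((p:ℝ))⁻¹
        ≤ ∑ p ∈ Nat.primesBelow ⌈x⌉₊, (1:ℝ) := by
          apply Finset.sum_le_sum
          intro p hp
          have hp' := Nat.prime_of_mem_primesBelow hp
          have h1 : (1:ℝ) ≤ p := by exact_mod_cast hp'.one_lt.le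
          rw [inv_le_one_iff₀]
          right; exact h1
      _ = (Nat.primesBelow ⌈x⌉₊).card := by rw [Finset.sum_const]; simp
      _ ≤ (⌈x⌉₊ : ℝ) := by
          have := Finset.card_filter_le (Finset.range ⌈x⌉₊) (fun p => p.Prime)
          have h2 : (Nat.primesBelow ⌈x⌉₊).card ≤ ⌈x⌉₊ := by
            simpa [Nat.primesBelow] using this
          exact_mod_cast h2
      _ ≤ 3 := by exact_mod_cast h
      _ ≤ LLog2 x + 9 := by linarith
  · set n := ⌈x⌉₊ - 1 with hn_def
    have hn3 : 3 ≤ n := by omega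
    have hceil : n + 1 = ⌈x⌉₊ := by omega
    have hnx : (n:ℝ) ≤ x := by
      have h1 : (⌈x⌉₊ : ℝ) < x + 1 := Nat.ceil_lt_add_one (by linarith)
      have h2 : ((n:ℕ) : ℝ) = (⌈x⌉₊ : ℝ) - 1 := by
        rw [hn_def, Nat.cast_sub (by omega)]
        norm_num
      linarith
    have hlogn : 0 < Real.log n := by
      apply Real.log_pos
      exact_mod_cast by omega
    have hll : Real.log (Real.log n) ≤ LLog2 x := by
      have h1 : Real.log n ≤ Real.log x := Real.log_le_log (by positivity) hnx
      have h2 : Real.log n ≤ LLog x := le_trans h1 (le_max_right _ _)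
      calc Real.log (Real.log n) ≤ Real.log (LLog x) := Real.log_le_log hlogn h2
        _ ≤ LLog2 x := le_max_right _ _
    calc ∑ p ∈ Nat.primesBelow ⌈x⌉₊, ((p:ℝ))⁻¹
        = ∑ p ∈ Nat.primesBelow (n+1), ((p:ℝ))⁻¹ := by rw [hceil]
      _ ≤ Real.log (Real.log n) + 9 := mertens2_nat n hn3
      _ ≤ LLog2 x + 9 := by linarith


end Aux


set_option maxHeartbeats 2000000 in
theorem statement18 :
    ∃ C : ℝ, 0 < C ∧ ∀ x y : ℝ, 1 ≤ y → y ≤ x →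
      primeProd y x * ∑ᶠ n ∈ {n | n ∈ Sset y x ∧ 2 * LLog2 x ≤ (omegaN n : ℝ)}, ((n : ℝ))⁻¹
        ≤ C / LLog x ^ (Real.log 4 - 1) := by
  classical
  refine ⟨Real.exp 9, Real.exp_pos 9, ?_⟩
  intro x y hy hyx
  have hx1 : (1:ℝ) ≤ x := le_trans hy hyx
  set L := LLog2 x with hL_def
  have hL1 : 1 ≤ L := le_max_left _ _
  set P := (Nat.primesBelow ⌈x⌉₊).filter (fun p : ℕ => y ≤ (p:ℝ) ∧ (p:ℝ) < x) with hP_def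
  have hPprime : ∀ p ∈ P, p.Prime := fun p hp =>
    Nat.prime_of_mem_primesBelow (Finset.mem_filter.1 hp).1
  have hPpos : ∀ p ∈ P, (0:ℝ) < p := fun p hp => by
    exact_mod_cast (hPprime p hp).pos
  -- set descriptions
  have hsetP : {p : ℕ | p.Prime ∧ y ≤ (p:ℝ) ∧ (p:ℝ) < x} = ↑P := by
    ext p
    simp only [Set.mem_setOf_eq, Finset.coe_filter, hP_def, Nat.mem_primesBelow]
    constructor
    · rintro ⟨h1, h2, h3⟩
      refine ⟨⟨?_, h1⟩, h2, h3⟩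
      have : (p:ℝ) < (⌈x⌉₊ : ℝ) := lt_of_lt_of_le h3 (Nat.le_ceil x)
      exact_mod_cast this
    · rintro ⟨⟨_, h1⟩, h2, h3⟩
      exact ⟨h1, h2, h3⟩
  have hPP : primeProd y x = ∏ p ∈ P, ((1:ℝ) + 1/p)⁻¹ := by
    rw [primeProd, hsetP, finprod_mem_coe_finset]
  -- the finite set of candidate n
  set F := P.powerset.image (fun s => ∏ p ∈ s, p) with hF_def
  set F2 := F.filter (fun n => n ∈ Sset y x ∧ 2 * LLog2 x ≤ (omegaN n : ℝ)) with hF2_def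
  have hsetT : {n : ℕ | n ∈ Sset y x ∧ 2 * LLog2 x ≤ (omegaN n : ℝ)} = ↑F2 := by
    ext n
    simp only [Set.mem_setOf_eq, Finset.coe_filter, hF2_def]
    constructor
    · rintro ⟨h1, h2⟩
      refine ⟨?_, h1, h2⟩
      obtain ⟨hn0, hsq, hpf⟩ := h1
      rw [hF_def, Finset.mem_image]
      refine ⟨n.primeFactors, ?_, Nat.prod_primeFactors_of_squarefree hsq⟩
      rw [Finset.mem_powerset]
      intro q hq
      have hq' := Nat.prime_of_mem_primeFactors hq
      obtain ⟨hq1, hq2⟩ := hpf q hq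
      rw [hP_def, Finset.mem_filter, Nat.mem_primesBelow]
      refine ⟨⟨?_, hq'⟩, hq1, hq2⟩
      have : (q:ℝ) < (⌈x⌉₊ : ℝ) := lt_of_lt_of_le hq2 (Nat.le_ceil x)
      exact_mod_cast this
    · rintro ⟨_, h1, h2⟩
      exact ⟨h1, h2⟩
  have hSS : ∑ᶠ n ∈ {n : ℕ | n ∈ Sset y x ∧ 2 * LLog2 x ≤ (omegaN n : ℝ)}, ((n : ℝ))⁻¹
      = ∑ n ∈ F2, ((n:ℝ))⁻¹ := by
    rw [hsetT, finsum_mem_coe_finset]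
  rw [hPP, hSS]
  -- basic positivity
  have hfac_pos : ∀ p ∈ P, (0:ℝ) < ((1:ℝ) + 1/p)⁻¹ := by
    intro p hp
    have := hPpos p hp
    positivity
  have hprod_inv_nonneg : (0:ℝ) ≤ ∏ p ∈ P, ((1:ℝ) + 1/p)⁻¹ :=
    Finset.prod_nonneg fun p hp => (hfac_pos p hp).le
  have hlog4 : Real.log 4 = 2 * Real.log 2 := by
    rw [show (4:ℝ) = 2^2 by norm_num, Real.log_pow]
    push_cast; ring
  -- step 1 : pointwise bound
  have hstep1 : ∑ n ∈ F2, ((n:ℝ))⁻¹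
      ≤ Real.exp (-(Real.log 4) * L) * ∑ n ∈ F2, (2:ℝ)^(omegaN n) * ((n:ℝ))⁻¹ := by
    rw [Finset.mul_sum]
    apply Finset.sum_le_sum
    intro n hn
    rw [hF2_def, Finset.mem_filter] at hn
    obtain ⟨hnF, hnS, hnomega⟩ := hn
    have hn0 : 0 < n := hnS.1
    have hn0' : (0:ℝ) < n := by exact_mod_cast hn0
    have h2pow : (2:ℝ)^(omegaN n) = Real.exp ((omegaN n : ℝ) * Real.log 2) := by
      rw [Real.exp_nat_mul, Real.exp_log two_pos]
    have hone : (1:ℝ) ≤ Real.exp (-(Real.log 4) * L) * (2:ℝ)^(omegaN n) := by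
      rw [h2pow, ← Real.exp_add]
      rw [show (1:ℝ) = Real.exp 0 by rw [Real.exp_zero]]
      apply Real.exp_le_exp.2
      have hlog2pos : (0:ℝ) < Real.log 2 := Real.log_pos (by norm_num)
      rw [hlog4]
      nlinarith
    calc ((n:ℝ))⁻¹ = 1 * ((n:ℝ))⁻¹ := (one_mul _).symm
      _ ≤ (Real.exp (-(Real.log 4) * L) * (2:ℝ)^(omegaN n)) * ((n:ℝ))⁻¹ := by
          apply mul_le_mul_of_nonneg_right hone
          positivity
      _ = Real.exp (-(Real.log 4) * L) * ((2:ℝ)^(omegaN n) * ((n:ℝ))⁻¹) := by ring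
  -- step 2: extend to F
  have hstep2 : ∑ n ∈ F2, (2:ℝ)^(omegaN n) * ((n:ℝ))⁻¹
      ≤ ∑ n ∈ F, (2:ℝ)^(omegaN n) * ((n:ℝ))⁻¹ := by
    apply Finset.sum_le_sum_of_subset_of_nonneg (Finset.filter_subset _ _)
    intro n _ _
    positivity
  -- step 3: sum over F equals sum over powerset
  have hinj : ∀ s ∈ P.powerset, ∀ t ∈ P.powerset, (∏ p ∈ s, p) = (∏ p ∈ t, p) → s = t := by
    intro s hs t ht hst
    rw [Finset.mem_powerset] at hs ht
    have h1 : (∏ p ∈ s, p).primeFactors = s := Nat.primeFactors_prod (fun p hp => hPprime p (hs hp))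
    have h2 : (∏ p ∈ t, p).primeFactors = t := Nat.primeFactors_prod (fun p hp => hPprime p (ht hp))
    rw [← h1, ← h2, hst]
  have hstep3 : ∑ n ∈ F, (2:ℝ)^(omegaN n) * ((n:ℝ))⁻¹
      = ∑ s ∈ P.powerset, ∏ p ∈ s, (2/(p:ℝ)) := by
    rw [hF_def, Finset.sum_image hinj]
    apply Finset.sum_congr rfl
    intro s hs
    rw [Finset.mem_powerset] at hs
    have hsprime : ∀ p ∈ s, p.Prime := fun p hp => hPprime p (hs hp)
    have homega : omegaN (∏ p ∈ s, p) = s.card := by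
      rw [omegaN, Nat.primeFactors_prod hsprime]
    have hcast : ((∏ p ∈ s, p : ℕ) : ℝ) = ∏ p ∈ s, (p:ℝ) := by push_cast; rfl
    rw [homega, hcast, ← Finset.prod_inv_distrib, ← Finset.prod_const (2:ℝ),
      ← Finset.prod_mul_distrib]
    apply Finset.prod_congr rfl
    intro p hp
    rw [div_eq_mul_inv]
  have hstep4 : ∑ s ∈ P.powerset, ∏ p ∈ s, (2/(p:ℝ)) = ∏ p ∈ P, (1 + 2/(p:ℝ)) := by
    have := Finset.prod_add (fun p : ℕ => 2/(p:ℝ)) (fun _ => (1:ℝ)) P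
    simp only [Finset.prod_const_one, mul_one] at this
    rw [← this]
    apply Finset.prod_congr rfl
    intro p _
    ring
  -- step 5: product comparison
  have hstep5 : (∏ p ∈ P, ((1:ℝ) + 1/p)⁻¹) * (∏ p ∈ P, (1 + 2/(p:ℝ)))
      ≤ Real.exp (∑ p ∈ P, ((p:ℝ))⁻¹) := by
    rw [← Finset.prod_mul_distrib, Real.exp_sum]
    apply Finset.prod_le_prod
    · intro p hp
      have h1 := hfac_pos p hp
      have h2 : (0:ℝ) < 1 + 2/(p:ℝ) := by have := hPpos p hp; positivity
      positivity
    · intro p hp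
      have hp0 := hPpos p hp
      have h1 : ((1:ℝ) + 1/p)⁻¹ * (1 + 2/(p:ℝ)) ≤ 1 + 1/(p:ℝ) := by
        rw [inv_mul_le_iff₀ (by positivity)]
        have h := sq_nonneg ((p:ℝ))⁻¹
        have e : (1+1/(p:ℝ))*(1+1/(p:ℝ)) = 1 + 2/(p:ℝ) + ((p:ℝ))⁻¹^2 := by ring
        rw [e]
        linarith
      have h2 : (1:ℝ) + 1/(p:ℝ) ≤ Real.exp (((p:ℝ))⁻¹) := by
        have := Real.add_one_le_exp (((p:ℝ))⁻¹)
        rw [one_div]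
        linarith
      linarith
  -- step 6 : Mertens
  have hstep6 : ∑ p ∈ P, ((p:ℝ))⁻¹ ≤ L + 9 := by
    calc ∑ p ∈ P, ((p:ℝ))⁻¹ ≤ ∑ p ∈ Nat.primesBelow ⌈x⌉₊, ((p:ℝ))⁻¹ := by
          apply Finset.sum_le_sum_of_subset_of_nonneg (Finset.filter_subset _ _)
          intro p hp _
          have : (0:ℝ) < p := by exact_mod_cast (Nat.prime_of_mem_primesBelow hp).pos
          positivity
      _ ≤ L + 9 := mertens2_real x hx1
  -- assemble
  have hSnn : (0:ℝ) ≤ ∑ n ∈ F2, (2:ℝ)^(omegaN n) * ((n:ℝ))⁻¹ :=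
    Finset.sum_nonneg fun n _ => by positivity
  have hprod2_nonneg : (0:ℝ) ≤ ∏ p ∈ P, (1 + 2/(p:ℝ)) :=
    Finset.prod_nonneg fun p hp => by have := hPpos p hp; positivity
  have hexp_pos : (0:ℝ) < Real.exp (-(Real.log 4) * L) := Real.exp_pos _
  have hmain : (∏ p ∈ P, ((1:ℝ) + 1/p)⁻¹) * ∑ n ∈ F2, ((n:ℝ))⁻¹
      ≤ Real.exp (-(Real.log 4) * L) * Real.exp (L + 9) := by
    calc (∏ p ∈ P, ((1:ℝ) + 1/p)⁻¹) * ∑ n ∈ F2, ((n:ℝ))⁻¹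
        ≤ (∏ p ∈ P, ((1:ℝ) + 1/p)⁻¹) *
            (Real.exp (-(Real.log 4) * L) * ∑ n ∈ F2, (2:ℝ)^(omegaN n) * ((n:ℝ))⁻¹) :=
          mul_le_mul_of_nonneg_left hstep1 hprod_inv_nonneg
      _ ≤ (∏ p ∈ P, ((1:ℝ) + 1/p)⁻¹) *
            (Real.exp (-(Real.log 4) * L) * ∑ n ∈ F, (2:ℝ)^(omegaN n) * ((n:ℝ))⁻¹) := by
          apply mul_le_mul_of_nonneg_left _ hprod_inv_nonneg
          exact mul_le_mul_of_nonneg_left hstep2 hexp_pos.le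
      _ = Real.exp (-(Real.log 4) * L) *
            ((∏ p ∈ P, ((1:ℝ) + 1/p)⁻¹) * (∏ p ∈ P, (1 + 2/(p:ℝ)))) := by
          rw [hstep3, hstep4]; ring
      _ ≤ Real.exp (-(Real.log 4) * L) * Real.exp (∑ p ∈ P, ((p:ℝ))⁻¹) :=
          mul_le_mul_of_nonneg_left hstep5 hexp_pos.le
      _ ≤ Real.exp (-(Real.log 4) * L) * Real.exp (L + 9) := by
          apply mul_le_mul_of_nonneg_left _ hexp_pos.le
          exact Real.exp_le_exp.2 hstep6
  -- final simplification
  have hLLx : (1:ℝ) ≤ LLog x := le_max_left _ _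
  have hLLx0 : (0:ℝ) < LLog x := by linarith
  have hlog4gt1 : 1 < Real.log 4 := by
    rw [Real.lt_log_iff_exp_lt (by norm_num : (0:ℝ) < 4)]
    linarith [exp_one_lt_3]
  have hLlog : Real.log (LLog x) ≤ L := le_max_right _ _
  have hfinal : Real.exp (-(Real.log 4) * L) * Real.exp (L + 9)
      ≤ Real.exp 9 / LLog x ^ (Real.log 4 - 1) := by
    rw [← Real.exp_add]
    have h1 : -(Real.log 4) * L + (L + 9) = 9 + (1 - Real.log 4) * L := by ring
    rw [h1, Real.exp_add]
    rw [Real.rpow_def_of_pos hLLx0]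
    rw [div_eq_mul_inv, ← Real.exp_neg]
    apply mul_le_mul_of_nonneg_left _ (Real.exp_pos 9).le
    apply Real.exp_le_exp.2
    have h2 : (1 - Real.log 4) * L ≤ (1 - Real.log 4) * Real.log (LLog x) := by
      apply mul_le_mul_of_nonpos_left hLlog (by linarith)
    calc (1 - Real.log 4) * L ≤ (1 - Real.log 4) * Real.log (LLog x) := h2
      _ = -(Real.log (LLog x) * (Real.log 4 - 1)) := by ring
  linarith [hmain, hfinal]
end
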